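/- Let n ≥ 3 and let B_{2n} : V_{2n−1} → GF(2) be defined by B_{2n}(y) = M_{2n}(1,y), where (1,y) denotes prepending the bit 1 to y. Then N(B_{2n}) = 2·(∑_{j=n+1}^{2n−2} C(2n−2,j)) + C(2n−2,n), where C(m,k) denotes the binomial coefficient. -/

import Mathlib

open Finset

/-- Hamming weight of a vector in `V_N = (Fin N → ZMod 2)`. -/
def wtV {N : ℕ} (x : Fin N → ZMod 2) : ℕ :=
  (Finset.univ.filter (fun i => x i = 1)).card

/-- Hamming weight of a Boolean function `f : V_N → GF(2)`. -/
def wtF {N : ℕ} (f : (Fin N → ZMod 2) → ZMod 2) : ℕ :=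
  (Finset.univ.filter (fun x => f x = 1)).card

/-- `a` is affine: `a x = w · x + b` for some `w ∈ V_N`, `b ∈ GF(2)`. -/
def IsAffine {N : ℕ} (a : (Fin N → ZMod 2) → ZMod 2) : Prop :=
  ∃ w : Fin N → ZMod 2, ∃ b : ZMod 2, ∀ x, a x = (∑ i, w i * x i) + b

/-- Hamming distance `d(f,g) = wt(f + g)`. -/
def hdist {N : ℕ} (f g : (Fin N → ZMod 2) → ZMod 2) : ℕ :=
  wtF (fun x => f x + g x)

/-- Nonlinearity: minimum distance to affine functions. -/
noncomputable def nlin {N : ℕ} (f : (Fin N → ZMod 2) → ZMod 2) : ℕ :=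
  sInf {d : ℕ | ∃ a, IsAffine a ∧ d = hdist f a}

/-- Threshold (majority-type) function: `maj N t x = 1` iff `wt(x) ≥ t`.
So `M_{2n+1} = maj (2n+1) (n+1)` and `M_{2n} = maj (2n) n`. -/
def maj (N t : ℕ) (x : Fin N → ZMod 2) : ZMod 2 :=
  if t ≤ wtV x then 1 else 0


lemma zmod2_ne_one' {a : ZMod 2} (h : ¬ a = 1) : a = 0 := by revert a; decide

lemma zmod2_cases' (a : ZMod 2) : a = 0 ∨ a = 1 := by revert a; decide

/-- counting vectors of small weight -/
lemma card_wt_lt' (N k : ℕ) :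
    ((univ : Finset (Fin N → ZMod 2)).filter (fun x => wtV x < k)).card
      = ∑ j ∈ Finset.range k, N.choose j := by
  have h1 : ((univ : Finset (Fin N → ZMod 2)).filter (fun x => wtV x < k)).card
      = ((univ : Finset (Finset (Fin N))).filter (fun s => s.card < k)).card := by
    apply Finset.card_bij (fun x _ => univ.filter (fun i => x i = 1))
    · intro x hx
      simp only [mem_filter, mem_univ, true_and] at hx ⊢
      exact hx
    · intro x₁ h₁ x₂ h₂ h
      funext i
      have : (i ∈ univ.filter (fun j => x₁ j = 1)) ↔ (i ∈ univ.filter (fun j => x₂ j = 1)) := by rw [h]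
      simp only [mem_filter, mem_univ, true_and] at this
      rcases eq_or_ne (x₁ i) 1 with h1 | h1
      · rw [h1, (this.mp h1).symm]
      · rw [zmod2_ne_one' h1, zmod2_ne_one' (fun hh => h1 (this.mpr hh))]
    · intro s hs
      have key : univ.filter (fun i => (if i ∈ s then (1:ZMod 2) else 0) = 1) = s := by
        ext i; simp only [mem_filter, mem_univ, true_and]
        by_cases h : i ∈ s <;> simp [h]
      simp only [mem_filter, mem_univ, true_and] at hs
      refine ⟨fun i => if i ∈ s then 1 else 0, ?_, key⟩
      simp only [mem_filter, mem_univ, true_and]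
      simpa [wtV, key] using hs
  rw [h1]
  have h2 : ((univ : Finset (Finset (Fin N))).filter (fun s => s.card < k))
      = (Finset.range k).biUnion (fun j => Finset.powersetCard j univ) := by
    ext s
    simp only [mem_filter, mem_univ, true_and, mem_biUnion, mem_range,
      Finset.mem_powersetCard_univ]
    constructor
    · intro h; exact ⟨s.card, h, rfl⟩
    · rintro ⟨j, hj, rfl⟩; exact hj
  rw [h2, Finset.card_biUnion]
  · apply Finset.sum_congr rfl
    intro j _
    rw [Finset.card_powersetCard, Finset.card_univ, Fintype.card_fin]
  · intro a _ b _ hab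
    simp only [Finset.disjoint_left, Finset.mem_powersetCard_univ]
    intro s h1 h2
    exact hab (h1 ▸ h2 ▸ rfl)

lemma binom_id' (n : ℕ) (hn : 3 ≤ n) :
    ∑ j ∈ Finset.range (n - 1), (2 * n - 1).choose j
      = 2 * (∑ j ∈ Finset.Icc (n + 1) (2 * n - 2), Nat.choose (2 * n - 2) j)
          + Nat.choose (2 * n - 2) n := by
  set M := 2 * n - 2 with hM
  have step1 : ∑ j ∈ Finset.Icc (n + 1) (2 * n - 2), M.choose j
      = ∑ j ∈ Finset.range (n - 2), M.choose j := by
    apply Finset.sum_nbij' (fun j => M - j) (fun j => M - j)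
    · intro a ha; simp only [mem_Icc] at ha; simp only [mem_range]; omega
    · intro a ha; simp only [mem_range] at ha; simp only [mem_Icc]; omega
    · intro a ha; simp only [mem_Icc] at ha; omega
    · intro a ha; simp only [mem_range] at ha; omega
    · intro a ha; simp only [mem_Icc] at ha
      exact (Nat.choose_symm (by omega)).symm
  have hsplit : ∑ j ∈ Finset.range (n - 1), (2 * n - 1).choose j
      = ∑ j ∈ Finset.range (n - 2), M.choose j + ∑ j ∈ Finset.range (n - 1), M.choose j := by
    have h1 : 2 * n - 1 = M + 1 := by omega
    have h2 : n - 1 = (n - 2) + 1 := by omega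
    rw [h1, h2, Finset.sum_range_succ' (fun j => (M+1).choose j) (n-2)]
    have h3 : ∀ j, (M+1).choose (j+1) = M.choose j + M.choose (j+1) :=
      fun j => Nat.choose_succ_succ M j
    rw [Finset.sum_congr rfl (fun j _ => h3 j), Finset.sum_add_distrib]
    have h4 : ∑ j ∈ Finset.range (n - 2), M.choose (j+1) + (M+1).choose 0
        = ∑ j ∈ Finset.range ((n - 2) + 1), M.choose j := by
      rw [Finset.sum_range_succ' (fun j => M.choose j) (n-2)]
      simp
    omega
  have step3 : ∑ j ∈ Finset.range (n - 1), M.choose j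
      = ∑ j ∈ Finset.range (n - 2), M.choose j + M.choose n := by
    have h2 : n - 1 = (n - 2) + 1 := by omega
    rw [h2, Finset.sum_range_succ]
    have : M.choose (n - 2) = M.choose n := by
      have := Nat.choose_symm (n := M) (k := n) (by omega)
      have hMn : M - n = n - 2 := by omega
      rw [hMn] at this; exact this
    rw [this]
  rw [hsplit, step3, step1]; ring

lemma flip_card_le' (n : ℕ) (hn : 3 ≤ n) (w : Fin (2 * n - 1) → ZMod 2) (c : ZMod 2)
    (T : Finset (Fin (2 * n - 1))) (hT : 2 * n - 2 ≤ T.card)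
    (hTw : ∑ i ∈ T, w i = 0) :
    ((univ : Finset (Fin (2*n-1) → ZMod 2)).filter
        (fun x => wtV x < n - 1 ∧ ∑ i, w i * x i = c)).card
      ≤ ((univ : Finset (Fin (2*n-1) → ZMod 2)).filter
        (fun x => n - 1 ≤ wtV x ∧ ∑ i, w i * x i = c)).card := by
  set φ : (Fin (2*n-1) → ZMod 2) → (Fin (2*n-1) → ZMod 2) :=
    fun x i => x i + (if i ∈ T then 1 else 0) with hφ
  apply Finset.card_le_card_of_injOn φ
  · intro x hx
    simp only [mem_coe, mem_filter, mem_univ, true_and] at hx ⊢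
    obtain ⟨hwt, hlin⟩ := hx
    constructor
    · have hsub : T.filter (fun i => ¬ x i = 1) ⊆ univ.filter (fun i => φ x i = 1) := by
        intro i hi
        simp only [mem_filter, mem_univ, true_and] at hi ⊢
        rw [hφ]; simp only []
        rw [zmod2_ne_one' hi.2, if_pos hi.1, zero_add]
      have h1 : (T.filter (fun i => x i = 1)).card + (T.filter (fun i => ¬ x i = 1)).card = T.card :=
        Finset.card_filter_add_card_filter_not _
      have h2 : (T.filter (fun i => x i = 1)).card ≤ wtV x :=
        Finset.card_le_card (fun i hi => by
          simp only [mem_filter, mem_univ, true_and] at hi ⊢; exact hi.2)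
      have h3 := Finset.card_le_card hsub
      have : wtV (φ x) = (univ.filter (fun i => φ x i = 1)).card := rfl
      omega
    · have : ∑ i, w i * (φ x) i = (∑ i, w i * x i) + ∑ i ∈ T, w i := by
        rw [hφ]
        simp only [mul_add]
        rw [Finset.sum_add_distrib]
        congr 1
        rw [← Finset.sum_filter_add_sum_filter_not univ (fun i => i ∈ T)]
        simp only [mul_ite, mul_one, mul_zero]
        rw [Finset.sum_ite_of_true, Finset.sum_ite_of_false]
        · simp [Finset.filter_mem_eq_inter]
        · intro i hi; simp only [mem_filter] at hi; exact hi.2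
        · intro i hi; simp only [mem_filter] at hi; exact hi.2
      rw [this, hTw, add_zero, hlin]
  · intro x _ y _ h
    funext i
    have := congrFun h i
    rw [hφ] at this
    simpa using this

lemma wt_cast_cons' (n : ℕ) (hn : 3 ≤ n) (y : Fin (2 * n - 1) → ZMod 2) :
    wtV (fun i => (Fin.cons (1 : ZMod 2) y : Fin (2 * n - 1 + 1) → ZMod 2)
        (Fin.cast (Nat.sub_add_cancel (by omega : 1 ≤ 2 * n)).symm i)) = wtV y + 1 := by
  have h : (2 : ℕ) * n = 2 * n - 1 + 1 := by omega
  unfold wtV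
  rw [Finset.card_filter, Finset.card_filter]
  rw [Fintype.sum_equiv (finCongr h)
    (fun i => if (Fin.cons (1 : ZMod 2) y : Fin (2 * n - 1 + 1) → ZMod 2) (Fin.cast h i) = 1 then 1 else 0)
    (fun i => if (Fin.cons (1 : ZMod 2) y : Fin (2 * n - 1 + 1) → ZMod 2) i = 1 then 1 else 0)
    (fun i => rfl)]
  rw [Fin.sum_univ_succ]
  simp [Fin.cons_zero, Fin.cons_succ, add_comm]


/-- `N(B(2n)) = 2·∑_{j=n+1}^{2n-2} C(2n-2,j) + C(2n-2,n)` where `B_{2n}(y) = M_{2n}(1,y)`. -/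
theorem nonlinearity_right_half_majority_even (n : ℕ) (hn : 3 ≤ n)
    (B : (Fin (2 * n - 1) → ZMod 2) → ZMod 2)
    (hB : ∀ y, B y = maj (2 * n) n
      (fun i => (Fin.cons (1 : ZMod 2) y : Fin (2 * n - 1 + 1) → ZMod 2)
        (Fin.cast (by omega : 2 * n = 2 * n - 1 + 1) i))) :
    nlin B = 2 * (∑ j ∈ Finset.Icc (n + 1) (2 * n - 2), Nat.choose (2 * n - 2) j)
              + Nat.choose (2 * n - 2) n := by
  classical
  -- B is the threshold function at n-1
  have hB' : ∀ y, B y = if n - 1 ≤ wtV y then 1 else 0 := by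
    intro y
    rw [hB y]
    unfold maj
    rw [wt_cast_cons' n hn y]
    by_cases h : n - 1 ≤ wtV y
    · rw [if_pos h, if_pos (by omega)]
    · rw [if_neg h, if_neg (by omega)]
  -- ZMod 2 helpers
  have hz1 : ∀ u v : ZMod 2, ((1:ZMod 2) + (u + v) = 1) ↔ u = v := by decide
  have hz0 : ∀ u v : ZMod 2, ((0:ZMod 2) + (u + v) = 1) ↔ ¬ u = v := by decide
  have hz3 : ∀ u : ZMod 2, (u + 1 = 1) ↔ u = 0 := by decide
  set D := ((univ : Finset (Fin (2*n-1) → ZMod 2)).filter (fun x => wtV x < n - 1)).card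
    with hDdef
  -- lower bound for any affine function
  have key_lower : ∀ (w : Fin (2*n-1) → ZMod 2) (b : ZMod 2),
      D ≤ wtF (fun x => B x + ((∑ i, w i * x i) + b)) := by
    intro w b
    -- find a good flip set T
    have hsum_univ : ∑ i, w i
        = (((univ : Finset (Fin (2*n-1))).filter (fun i => w i = 1)).card : ZMod 2) := by
      rw [← Finset.sum_filter_add_sum_filter_not univ (fun i => w i = 1)]
      have h1 : ∑ i ∈ univ.filter (fun i => w i = 1), w i
          = (((univ : Finset (Fin (2*n-1))).filter (fun i => w i = 1)).card : ZMod 2) := by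
        rw [Finset.sum_congr rfl (fun i hi => (Finset.mem_filter.mp hi).2)]
        simp
      have h2 : ∑ i ∈ univ.filter (fun i => ¬ w i = 1), w i = 0 :=
        Finset.sum_eq_zero (fun i hi => zmod2_ne_one' (Finset.mem_filter.mp hi).2)
      rw [h1, h2, add_zero]
    obtain ⟨T, hTcard, hTw⟩ : ∃ T : Finset (Fin (2*n-1)), 2*n-2 ≤ T.card ∧ ∑ i ∈ T, w i = 0 := by
      set s := (univ : Finset (Fin (2*n-1))).filter (fun i => w i = 1) with hs
      by_cases hpar : Even s.card
      · refine ⟨univ, ?_, ?_⟩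
        · rw [Finset.card_univ, Fintype.card_fin]; omega
        · rw [hsum_univ, ← ZMod.natCast_mod]
          rw [Nat.even_iff.mp hpar]
          simp
      · have hne : s.Nonempty := by
          rw [Finset.nonempty_iff_ne_empty]
          intro h; rw [h] at hpar; simp at hpar
        obtain ⟨i₀, hi₀⟩ := hne
        refine ⟨univ.erase i₀, ?_, ?_⟩
        · rw [Finset.card_erase_of_mem (mem_univ i₀), Finset.card_univ, Fintype.card_fin]; omega
        · rw [Finset.sum_erase_eq_sub (mem_univ i₀), hsum_univ,
            (Finset.mem_filter.mp hi₀).2, ← ZMod.natCast_mod]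
          rw [Nat.odd_iff.mp (Nat.not_even_iff_odd.mp hpar)]
          simp
    -- decompose the mismatch count
    have hmm : wtF (fun x => B x + ((∑ i, w i * x i) + b))
        = ((univ : Finset (Fin (2*n-1) → ZMod 2)).filter
            (fun x => n - 1 ≤ wtV x ∧ (∑ i, w i * x i) = b)).card
          + ((univ : Finset (Fin (2*n-1) → ZMod 2)).filter
            (fun x => wtV x < n - 1 ∧ ¬ (∑ i, w i * x i) = b)).card := by
      unfold wtF
      rw [← Finset.card_filter_add_card_filter_not
        (s := (univ : Finset (Fin (2*n-1) → ZMod 2)).filter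
          (fun x => B x + ((∑ i, w i * x i) + b) = 1))
        (fun x => (∑ i, w i * x i) = b)]
      congr 1
      · rw [Finset.filter_filter]
        congr 1
        ext x
        simp only [mem_filter, mem_univ, true_and]
        rw [hB' x]
        by_cases hp : n - 1 ≤ wtV x
        · rw [if_pos hp]
          constructor
          · rintro ⟨_, h2⟩; exact ⟨hp, h2⟩
          · rintro ⟨_, h2⟩; exact ⟨(hz1 _ _).mpr h2, h2⟩
        · rw [if_neg hp]
          constructor
          · rintro ⟨h1, h2⟩; exact absurd h2 ((hz0 _ _).mp h1)
          · rintro ⟨h1, _⟩; omega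
      · rw [Finset.filter_filter]
        congr 1
        ext x
        simp only [mem_filter, mem_univ, true_and]
        rw [hB' x]
        by_cases hp : n - 1 ≤ wtV x
        · rw [if_pos hp]
          constructor
          · rintro ⟨h1, h2⟩; exact absurd ((hz1 _ _).mp h1) h2
          · rintro ⟨h1, _⟩; omega
        · rw [if_neg hp]
          constructor
          · rintro ⟨_, h2⟩; exact ⟨by omega, h2⟩
          · rintro ⟨_, h2⟩; exact ⟨(hz0 _ _).mpr h2, h2⟩
    -- decompose D
    have hDsplit := Finset.card_filter_add_card_filter_not
        (s := (univ : Finset (Fin (2*n-1) → ZMod 2)).filter (fun x => wtV x < n - 1))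
        (fun x => (∑ i, w i * x i) = b)
    simp only [Finset.filter_filter] at hDsplit
    rw [hmm, hDdef, ← hDsplit]
    exact Nat.add_le_add_right (flip_card_le' n hn w b T hTcard hTw) _
  -- membership: the constant-1 function achieves D
  have hmem : D ∈ {d : ℕ | ∃ a, IsAffine a ∧ d = hdist B a} := by
    refine ⟨fun _ => 1, ⟨fun _ => 0, 1, fun x => by simp⟩, ?_⟩
    unfold hdist wtF
    rw [hDdef]
    congr 1
    ext x
    simp only [mem_filter, mem_univ, true_and]
    rw [hz3, hB' x]
    by_cases hp : n - 1 ≤ wtV x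
    · rw [if_pos hp]
      constructor
      · intro h; exact absurd h (by omega)
      · intro h; exact absurd h one_ne_zero
    · rw [if_neg hp]
      constructor
      · intro _; rfl
      · intro _; omega
  have hlow : ∀ d ∈ {d : ℕ | ∃ a, IsAffine a ∧ d = hdist B a}, D ≤ d := by
    rintro d ⟨a, ⟨w, b, ha⟩, rfl⟩
    unfold hdist
    have : (fun x => B x + a x) = (fun x => B x + ((∑ i, w i * x i) + b)) :=
      funext fun x => by rw [ha]
    rw [this]
    exact key_lower w b
  have hnlin : nlin B = D := by
    unfold nlin
    exact le_antisymm (Nat.sInf_le hmem) (le_csInf ⟨D, hmem⟩ hlow)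
  rw [hnlin, hDdef, card_wt_lt', binom_id' n hn]
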